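/- Fix r* ∈ [n] and X ⊆ [n] \ {r*}, and define F_4(X, r*) as the set consisting of the two closest elements of X ∪ {0} to the left of r* and the two closest elements of X ∪ {n+1} to the right of r*, with enclosing interval I_4(X, r*) = [second-left, second-right]. Then for any x ∈ X: (a) if x ∈ F_4(X, r*) then I_4(X, r*) ⊆ I_4(X − x, r*); (b) if x ∉ F_4(X, r*) then F_4(X, r*) = F_4(X − x, r*) and I_4(X, r*) = I_4(X − x, r*). -/

import Mathlib

open Finset

/-- `pre_Y(y)`: the largest element of `Y ∪ {0}` strictly less than `y`. -/
def preN (Y : Finset ℕ) (y : ℕ) : ℕ :=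
  WithBot.unbotD 0 (((insert 0 Y).filter fun x => x < y).max)

/-- `nex_Y(y)`: the smallest element of `Y ∪ {n+1}` strictly greater than `y`. -/
def nexN (Y : Finset ℕ) (n y : ℕ) : ℕ :=
  WithTop.untopD (n + 1) (((insert (n + 1) Y).filter fun x => y < x).min)

/-- The forbidden set `F_4(X, r*)`: the two closest elements of `X ∪ {0}` to the left
of `r*` and the two closest elements of `X ∪ {n+1}` to the right of `r*`. -/
def F4 (X : Finset ℕ) (n r : ℕ) : Finset ℕ :=
  {preN X (preN (insert r X) r), preN (insert r X) r,
    nexN (insert r X) n r, nexN X n (nexN (insert r X) n r)}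

/-- The enclosing interval `I_4(X, r*)` of `F_4(X, r*)`. -/
def I4 (X : Finset ℕ) (n r : ℕ) : Finset ℕ :=
  Finset.Icc (preN X (preN (insert r X) r)) (nexN X n (nexN (insert r X) n r))

lemma preN_eq_max' {Y : Finset ℕ} {y : ℕ}
    (h : ((insert 0 Y).filter fun x => x < y).Nonempty) :
    preN Y y = ((insert 0 Y).filter fun x => x < y).max' h := by
  rw [preN, ← Finset.coe_max' h]; rfl

lemma preN_zero (Y : Finset ℕ) : preN Y 0 = 0 := by
  simp [preN]

lemma le_preN {Y : Finset ℕ} {y z : ℕ} (hz : z ∈ insert 0 Y) (hzy : z < y) :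
    z ≤ preN Y y := by
  have hmem : z ∈ (insert 0 Y).filter fun x => x < y := mem_filter.2 ⟨hz, hzy⟩
  rw [preN_eq_max' ⟨z, hmem⟩]
  exact le_max' _ _ hmem

lemma preN_mem (Y : Finset ℕ) (y : ℕ) : preN Y y ∈ insert 0 Y := by
  rcases ((insert 0 Y).filter fun x => x < y).eq_empty_or_nonempty with h | h
  · rw [preN, h]; simp
  · rw [preN_eq_max' h]
    exact (mem_filter.1 (max'_mem _ h)).1

lemma preN_lt {Y : Finset ℕ} {y : ℕ} (hy : 0 < y) : preN Y y < y := by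
  have h0 : (0:ℕ) ∈ (insert 0 Y).filter fun x => x < y :=
    mem_filter.2 ⟨mem_insert_self _ _, hy⟩
  rw [preN_eq_max' ⟨0, h0⟩]
  exact (mem_filter.1 (max'_mem _ ⟨0, h0⟩)).2

lemma preN_subset_mono {Y Z : Finset ℕ} (h : Y ⊆ Z) (y : ℕ) :
    preN Y y ≤ preN Z y := by
  rcases Nat.eq_zero_or_pos y with rfl | hy
  · simp [preN_zero]
  · exact le_preN (insert_subset_insert 0 h (preN_mem Y y)) (preN_lt hy)

lemma preN_y_mono {Y : Finset ℕ} {y y' : ℕ} (h : y ≤ y') :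
    preN Y y ≤ preN Y y' := by
  rcases Nat.eq_zero_or_pos y with rfl | hy
  · simp [preN_zero]
  · exact le_preN (preN_mem Y y) (lt_of_lt_of_le (preN_lt hy) h)

lemma preN_insert_self (Y : Finset ℕ) (r : ℕ) :
    preN (insert r Y) r = preN Y r := by
  unfold preN
  rw [Finset.insert_comm, filter_insert, if_neg (lt_irrefl r)]

lemma nexN_eq_min' {Y : Finset ℕ} {n y : ℕ}
    (h : ((insert (n+1) Y).filter fun x => y < x).Nonempty) :
    nexN Y n y = ((insert (n+1) Y).filter fun x => y < x).min' h := by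
  rw [nexN, ← Finset.coe_min' h]; rfl

lemma nexN_le {Y : Finset ℕ} {n y z : ℕ} (hz : z ∈ insert (n+1) Y) (hyz : y < z) :
    nexN Y n y ≤ z := by
  have hmem : z ∈ (insert (n+1) Y).filter fun x => y < x := mem_filter.2 ⟨hz, hyz⟩
  rw [nexN_eq_min' ⟨z, hmem⟩]
  exact min'_le _ _ hmem

lemma nexN_mem (Y : Finset ℕ) (n y : ℕ) : nexN Y n y ∈ insert (n+1) Y := by
  rcases ((insert (n+1) Y).filter fun x => y < x).eq_empty_or_nonempty with h | h
  · rw [nexN, h]; simp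
  · rw [nexN_eq_min' h]
    exact (mem_filter.1 (min'_mem _ h)).1

lemma nexN_gt {Y : Finset ℕ} {n y : ℕ} (hy : y < n+1) : y < nexN Y n y := by
  have h0 : (n+1) ∈ (insert (n+1) Y).filter fun x => y < x :=
    mem_filter.2 ⟨mem_insert_self _ _, hy⟩
  rw [nexN_eq_min' ⟨n+1, h0⟩]
  exact (mem_filter.1 (min'_mem _ ⟨n+1, h0⟩)).2

lemma nexN_top {Y : Finset ℕ} {n y : ℕ} (hY : Y ⊆ Finset.Icc 1 n) (hy : n+1 ≤ y) :
    nexN Y n y = n+1 := by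
  have h : ((insert (n+1) Y).filter fun x => y < x) = ∅ := by
    rw [filter_eq_empty_iff]
    intro z hz
    rcases mem_insert.1 hz with rfl | hz
    · omega
    · have := (mem_Icc.1 (hY hz)).2
      omega
  rw [nexN, h]; rfl

lemma nexN_le_top {Y : Finset ℕ} {n y : ℕ} (hY : Y ⊆ Finset.Icc 1 n) :
    nexN Y n y ≤ n+1 := by
  rcases lt_or_ge y (n+1) with hy | hy
  · exact nexN_le (mem_insert_self _ _) hy
  · exact le_of_eq (nexN_top hY hy)

lemma nexN_subset_mono {Y Z : Finset ℕ} {n y : ℕ} (h : Y ⊆ Z)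
    (hZ : Z ⊆ Finset.Icc 1 n) : nexN Z n y ≤ nexN Y n y := by
  rcases lt_or_ge y (n+1) with hy | hy
  · exact nexN_le (insert_subset_insert _ h (nexN_mem Y n y)) (nexN_gt hy)
  · rw [nexN_top (h.trans hZ) hy]
    exact nexN_le_top hZ

lemma nexN_y_mono {Y : Finset ℕ} {n y y' : ℕ} (hY : Y ⊆ Finset.Icc 1 n)
    (h : y ≤ y') : nexN Y n y ≤ nexN Y n y' := by
  rcases lt_or_ge y' (n+1) with hy | hy
  · exact nexN_le (nexN_mem Y n y') (lt_of_le_of_lt h (nexN_gt hy))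
  · rw [nexN_top hY hy]
    exact nexN_le_top hY

lemma nexN_insert_self (Y : Finset ℕ) (n r : ℕ) :
    nexN (insert r Y) n r = nexN Y n r := by
  unfold nexN
  rw [Finset.insert_comm, filter_insert, if_neg (lt_irrefl r)]

lemma F4_eq (X : Finset ℕ) (n r : ℕ) :
    F4 X n r = {preN X (preN X r), preN X r, nexN X n r, nexN X n (nexN X n r)} := by
  rw [F4, preN_insert_self, nexN_insert_self]

lemma I4_eq (X : Finset ℕ) (n r : ℕ) :
    I4 X n r = Finset.Icc (preN X (preN X r)) (nexN X n (nexN X n r)) := by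
  rw [I4, preN_insert_self, nexN_insert_self]

/-- Monotonicity of the forbidden sets for semiplanar gammoids: for `x ∈ X`,
(a) if `x ∈ F_4(X,r*)` then `I_4(X,r*) ⊆ I_4(X−x,r*)`; (b) if `x ∉ F_4(X,r*)` then
`F_4(X,r*) = F_4(X−x,r*)` and `I_4(X,r*) = I_4(X−x,r*)`. -/
theorem F4_I4_monotone (n r : ℕ) (X : Finset ℕ) (hX : X ⊆ Finset.Icc 1 n)
    (hr : r ∈ Finset.Icc 1 n) (hrX : r ∉ X) (x : ℕ) (hx : x ∈ X) :
    (x ∈ F4 X n r → I4 X n r ⊆ I4 (X.erase x) n r) ∧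
    (x ∉ F4 X n r → F4 (X.erase x) n r = F4 X n r ∧ I4 (X.erase x) n r = I4 X n r) := by
  obtain ⟨hr1, hrn⟩ := mem_Icc.1 hr
  obtain ⟨hx1, hxn⟩ := mem_Icc.1 (hX hx)
  have hE : X.erase x ⊆ X := erase_subset x X
  have hEX : X.erase x ⊆ Finset.Icc 1 n := hE.trans hX
  constructor
  · intro _
    rw [I4_eq, I4_eq]
    apply Icc_subset_Icc
    · calc preN (X.erase x) (preN (X.erase x) r)
          ≤ preN (X.erase x) (preN X r) :=
            preN_y_mono (preN_subset_mono hE r)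
        _ ≤ preN X (preN X r) := preN_subset_mono hE _
    · calc nexN X n (nexN X n r)
          ≤ nexN X n (nexN (X.erase x) n r) :=
            nexN_y_mono hX (nexN_subset_mono hE hX)
        _ ≤ nexN (X.erase x) n (nexN (X.erase x) n r) := nexN_subset_mono hE hX
  · intro hxF
    rw [F4_eq, mem_insert, mem_insert, mem_insert, mem_singleton] at hxF
    push_neg at hxF
    obtain ⟨hxp2, hxp1, hxq1, hxq2⟩ := hxF
    -- p1
    have hp1e : preN (X.erase x) r = preN X r := by
      refine le_antisymm (preN_subset_mono hE r) (le_preN ?_ (preN_lt hr1))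
      rcases mem_insert.1 (preN_mem X r) with h0 | hmem
      · exact mem_insert.2 (Or.inl h0)
      · exact mem_insert.2 (Or.inr (mem_erase.2 ⟨hxp1.symm, hmem⟩))
    -- p2
    have hp2e : preN (X.erase x) (preN (X.erase x) r) = preN X (preN X r) := by
      rw [hp1e]
      rcases Nat.eq_zero_or_pos (preN X r) with hz | hpos
      · rw [hz, preN_zero, preN_zero]
      refine le_antisymm (preN_subset_mono hE _) (le_preN ?_ (preN_lt hpos))
      rcases mem_insert.1 (preN_mem X (preN X r)) with h0 | hmem
      · exact mem_insert.2 (Or.inl h0)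
      · exact mem_insert.2 (Or.inr (mem_erase.2 ⟨hxp2.symm, hmem⟩))
    -- q1
    have hq1e : nexN (X.erase x) n r = nexN X n r := by
      refine le_antisymm (nexN_le ?_ (nexN_gt (by omega))) (nexN_subset_mono hE hX)
      rcases mem_insert.1 (nexN_mem X n r) with h0 | hmem
      · exact mem_insert.2 (Or.inl h0)
      · exact mem_insert.2 (Or.inr (mem_erase.2 ⟨hxq1.symm, hmem⟩))
    -- q2
    have hq2e : nexN (X.erase x) n (nexN (X.erase x) n r) = nexN X n (nexN X n r) := by
      rw [hq1e]
      rcases lt_or_ge (nexN X n r) (n+1) with hlt | hge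
      · refine le_antisymm (nexN_le ?_ (nexN_gt hlt)) (nexN_subset_mono hE hX)
        rcases mem_insert.1 (nexN_mem X n (nexN X n r)) with h0 | hmem
        · exact mem_insert.2 (Or.inl h0)
        · exact mem_insert.2 (Or.inr (mem_erase.2 ⟨hxq2.symm, hmem⟩))
      · rw [nexN_top hEX hge, nexN_top hX hge]
    exact ⟨by rw [F4_eq, F4_eq, hp2e, hq2e, hp1e, hq1e],
      by rw [I4_eq, I4_eq, hp2e, hq2e]⟩
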